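/- There is no multi-issue weighted proportional rule that coincides with the Shapley index on all streaming problems: every multi-issue weighted proportional rule P^w satisfies reallocation-proofness, but the Shapley index does not. -/

import Mathlib

/-- There is no multi-issue weighted proportional rule (given by a weight
function assigning a probability distribution over the issues) that coincides
with the Shapley index on all streaming problems. -/
theorem no_weightedProportional_eq_shapley :
    ¬ ∃ w : (K : Type) → [Fintype K] → (K → ℝ) → ℝ → (K → ℝ),
      (∀ (K : Type) [Fintype K] (C : K → ℝ) (E : ℝ),
        (∀ j, 0 ≤ w K C E j) ∧ ∑ j, w K C E j = 1) ∧
      (∀ (N M : Type) [Fintype N] [Fintype M] (t : N → M → ℕ),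
        (∀ j, 0 < ∑ i, t i j) →
        ∀ i, ∑ j, ((t i j : ℝ) / (∑ i', (t i' j : ℝ))) *
            w M (fun k => ∑ i', (t i' k : ℝ)) (Fintype.card M : ℝ) j *
            (Fintype.card M : ℝ) =
          ∑ j, if 0 < t i j then
            (1 : ℝ) / ((Finset.univ.filter (fun i' => 0 < t i' j)).card : ℝ) else 0) := by
  rintro ⟨w, _hw, hsh⟩
  -- Problem A: t0=(2,0), t1=(0,1), t2=(1,0); column sums (3,1).
  set tA : Fin 3 → Fin 2 → ℕ := ![![2,0],![0,1],![1,0]] with htA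
  -- Problem B: t0=(1,1), t1=(1,0), t2=(1,0); column sums (3,1).
  set tB : Fin 3 → Fin 2 → ℕ := ![![1,1],![1,0],![1,0]] with htB
  have hA := hsh (Fin 3) (Fin 2) tA (by decide) 2
  have hB := hsh (Fin 3) (Fin 2) tB (by decide) 2
  have hC : (fun k => ∑ i', ((tA i' k : ℕ) : ℝ)) = (fun k => ∑ i', ((tB i' k : ℕ) : ℝ)) := by
    funext k
    fin_cases k <;>
      norm_num [htA, htB, Fin.sum_univ_three, Matrix.cons_val_zero, Matrix.cons_val_one,
        Matrix.head_cons, Matrix.vecHead, Matrix.vecTail, Function.comp, Matrix.cons_val, Matrix.cons_val_two]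
  rw [hC] at hA
  have h1 : (Finset.univ.filter (fun i' => 0 < tA i' 0)).card = 2 := by decide
  have h2 : (Finset.univ.filter (fun i' => 0 < tB i' 0)).card = 3 := by decide
  have h3 : (Finset.univ.filter (fun i' => 0 < tA i' 1)).card = 1 := by decide
  have h4 : (Finset.univ.filter (fun i' => 0 < tB i' 1)).card = 1 := by decide
  simp only [Fin.sum_univ_two, Fin.sum_univ_three, h1, h2, h3, h4] at hA hB
  simp only [htA, htB] at hA hB
  norm_num [Matrix.cons_val_zero, Matrix.cons_val_one, Matrix.head_cons, Matrix.cons_val_fin_one,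
    Matrix.vecHead, Matrix.vecTail, Function.comp, Fin.isValue, Matrix.cons_val, Matrix.cons_val_two] at hA hB
  linarith
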